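/- Let n ≥ 1 and let θ = α_{2n+1} |◇ Id_{2n+1} be the left pasting of the Stefan orbit α_{2n+1} with the identity permutation of {1,…,2n+1}. Then θ is a simple permutation of mixed order 4n+2; concretely: (i) θ maps the set {1,…,2n+1} onto the set {2n+2,…,4n+2} and maps {2n+2,…,4n+2} onto {1,…,2n+1}; (ii) θ² = α_{2n+1} ◇| α_{2n+1}; (iii) the order of θ is 4n+2. -/

import Mathlib

/-- Left pasting `α |◇ β`: the permutation of `{1,…,m+n}` with
`(α |◇ β)(i) = α(i) + n` for `1 ≤ i ≤ m` and `(α |◇ β)(m+i) = β(i)` for `1 ≤ i ≤ n`. -/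
def pasteLeft {m n : ℕ} (α : Equiv.Perm (Fin m)) (β : Equiv.Perm (Fin n)) :
    Equiv.Perm (Fin (m + n)) :=
  finSumFinEquiv.symm.trans ((Equiv.sumCongr α β).trans
    ((Equiv.sumComm (Fin m) (Fin n)).trans (finSumFinEquiv.trans (finCongr (Nat.add_comm n m)))))

/-- Right pasting `α ◇| β`: the permutation of `{1,…,m+n}` with
`(α ◇| β)(i) = α(i)` for `1 ≤ i ≤ m` and `(α ◇| β)(m+i) = β(i) + m` for `1 ≤ i ≤ n`. -/
def pasteRight {m n : ℕ} (α : Equiv.Perm (Fin m)) (β : Equiv.Perm (Fin n)) :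
    Equiv.Perm (Fin (m + n)) :=
  finSumFinEquiv.symm.trans ((Equiv.sumCongr α β).trans finSumFinEquiv)

/-- Transport a permutation of `Fin ((2n+1)+(2n+1))` to one of `Fin (4n+2)`. -/
def toPerm42 (n : ℕ) (σ : Equiv.Perm (Fin (2 * n + 1 + (2 * n + 1)))) :
    Equiv.Perm (Fin (4 * n + 2)) :=
  (finCongr (by omega : 2 * n + 1 + (2 * n + 1) = 4 * n + 2)).permCongr σ

lemma theta_lower (n : ℕ) (α β : Equiv.Perm (Fin (2*n+1))) (x : Fin (4*n+2))
    (hx : (x:ℕ) < 2*n+1) :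
    (toPerm42 n (pasteLeft α β) x : ℕ) = 2*n+1 + (α ⟨x, hx⟩ : ℕ) := by
  have h1 : (finCongr (by omega : 2 * n + 1 + (2 * n + 1) = 4 * n + 2)).symm x
      = Fin.castAdd (2*n+1) ⟨x, hx⟩ := by ext; simp
  rw [toPerm42, Equiv.permCongr_apply, h1, pasteLeft]
  simp only [Equiv.trans_apply, finSumFinEquiv_symm_apply_castAdd]
  simp; omega

lemma theta_upper (n : ℕ) (α : Equiv.Perm (Fin (2*n+1))) (x : Fin (4*n+2))
    (hx : 2*n+1 ≤ (x:ℕ)) :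
    (toPerm42 n (pasteLeft α 1) x : ℕ) = (x:ℕ) - (2*n+1) := by
  have h1 : (finCongr (by omega : 2 * n + 1 + (2 * n + 1) = 4 * n + 2)).symm x
      = Fin.natAdd (2*n+1) ⟨(x:ℕ) - (2*n+1), by omega⟩ := by ext; simp [Fin.natAdd]; omega
  rw [toPerm42, Equiv.permCongr_apply, h1, pasteLeft]
  simp only [Equiv.trans_apply, finSumFinEquiv_symm_apply_natAdd]
  simp

lemma pr_lower (n : ℕ) (α β : Equiv.Perm (Fin (2*n+1))) (x : Fin (4*n+2))
    (hx : (x:ℕ) < 2*n+1) :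
    (toPerm42 n (pasteRight α β) x : ℕ) = (α ⟨x, hx⟩ : ℕ) := by
  have h1 : (finCongr (by omega : 2 * n + 1 + (2 * n + 1) = 4 * n + 2)).symm x
      = Fin.castAdd (2*n+1) ⟨x, hx⟩ := by ext; simp
  rw [toPerm42, Equiv.permCongr_apply, h1, pasteRight]
  simp only [Equiv.trans_apply, finSumFinEquiv_symm_apply_castAdd]
  simp

lemma pr_upper (n : ℕ) (α β : Equiv.Perm (Fin (2*n+1))) (x : Fin (4*n+2))
    (hx : 2*n+1 ≤ (x:ℕ)) :
    (toPerm42 n (pasteRight α β) x : ℕ) = 2*n+1 + (β ⟨(x:ℕ)-(2*n+1), by omega⟩ : ℕ) := by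
  have h1 : (finCongr (by omega : 2 * n + 1 + (2 * n + 1) = 4 * n + 2)).symm x
      = Fin.natAdd (2*n+1) ⟨(x:ℕ) - (2*n+1), by omega⟩ := by ext; simp [Fin.natAdd]; omega
  rw [toPerm42, Equiv.permCongr_apply, h1, pasteRight]
  simp only [Equiv.trans_apply, finSumFinEquiv_symm_apply_natAdd]
  simp; omega

/-- `θ = α_{2n+1} |◇ Id_{2n+1}` is a simple permutation of mixed order `4n+2`:
(i) `θ` maps `{1,…,2n+1}` onto `{2n+2,…,4n+2}` and vice versa;
(ii) `θ² = α_{2n+1} ◇| α_{2n+1}`; (iii) `orderOf θ = 4n+2`.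
The Stefan orbit `α = α_{2n+1}` is characterized 1-indexed by the hypotheses
(`i : Fin (2*n+1)` represents the point `(i : ℕ) + 1`). -/
theorem pasteLeft_alpha_id_is_simple (n : ℕ) (hn : 1 ≤ n)
    (α : Equiv.Perm (Fin (2 * n + 1)))
    (hα1 : ∀ i : Fin (2 * n + 1), 1 ≤ (i : ℕ) + 1 → (i : ℕ) + 1 ≤ n →
      (α i : ℕ) + 1 = 2 * n + 2 - ((i : ℕ) + 1))
    (hα2 : ∀ i : Fin (2 * n + 1), n + 1 ≤ (i : ℕ) + 1 → (i : ℕ) + 1 ≤ 2 * n →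
      (α i : ℕ) + 1 = 2 * n + 1 - ((i : ℕ) + 1))
    (hα3 : ∀ i : Fin (2 * n + 1), (i : ℕ) + 1 = 2 * n + 1 → (α i : ℕ) + 1 = n + 1)
    (θ : Equiv.Perm (Fin (4 * n + 2)))
    (hθ : θ = toPerm42 n (pasteLeft α (1 : Equiv.Perm (Fin (2 * n + 1))))) :
    ⇑θ '' {x : Fin (4 * n + 2) | (x : ℕ) < 2 * n + 1} =
        {x : Fin (4 * n + 2) | 2 * n + 1 ≤ (x : ℕ)} ∧
    ⇑θ '' {x : Fin (4 * n + 2) | 2 * n + 1 ≤ (x : ℕ)} =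
        {x : Fin (4 * n + 2) | (x : ℕ) < 2 * n + 1} ∧
    θ ^ 2 = toPerm42 n (pasteRight α α) ∧
    orderOf θ = 4 * n + 2 := by
  subst hθ
  set θ := toPerm42 n (pasteLeft α (1 : Equiv.Perm (Fin (2 * n + 1)))) with hθ
  have hlo : ∀ (x : Fin (4*n+2)) (hx : (x:ℕ) < 2*n+1),
      (θ x : ℕ) = 2*n+1 + (α ⟨x, hx⟩ : ℕ) := fun x hx => theta_lower n α 1 x hx
  have hup : ∀ (x : Fin (4*n+2)), 2*n+1 ≤ (x:ℕ) → (θ x : ℕ) = (x:ℕ) - (2*n+1) :=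
    fun x hx => theta_upper n α x hx
  -- embedding of the lower block
  open Fin.NatCast in
  have hL : ∀ w : Fin (2*n+1), ((w : ℕ) : Fin (4*n+2)).1 = (w : ℕ) := by
    intro w
    simp [Fin.val_natCast, Nat.mod_eq_of_lt (by omega : (w:ℕ) < 4*n+2)]
  -- image statements
  have himg1 : ⇑θ '' {x : Fin (4 * n + 2) | (x : ℕ) < 2 * n + 1} =
      {x : Fin (4 * n + 2) | 2 * n + 1 ≤ (x : ℕ)} := by
    ext y
    constructor
    · rintro ⟨x, hx, rfl⟩
      have := hlo x hx
      simp only [Set.mem_setOf_eq] at *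
      omega
    · intro hy
      simp only [Set.mem_setOf_eq] at hy
      refine ⟨⟨(α.symm ⟨(y:ℕ) - (2*n+1), by omega⟩ : Fin (2*n+1)), by omega⟩, ?_, ?_⟩
      · simpa using (α.symm ⟨(y:ℕ) - (2*n+1), by omega⟩).isLt
      · apply Fin.ext
        rw [hlo _ (by simpa using (α.symm ⟨(y:ℕ) - (2*n+1), by omega⟩).isLt)]
        have : (⟨((α.symm ⟨(y:ℕ) - (2*n+1), by omega⟩ : Fin (2*n+1)) : ℕ), by omega⟩ :
            Fin (2*n+1)) = α.symm ⟨(y:ℕ) - (2*n+1), by omega⟩ := by ext; rfl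
        rw [this, Equiv.apply_symm_apply]
        simp; omega
  have hcompl : {x : Fin (4 * n + 2) | 2 * n + 1 ≤ (x : ℕ)} =
      {x : Fin (4 * n + 2) | (x : ℕ) < 2 * n + 1}ᶜ := by
    ext x; simp [not_lt]
  have himg2 : ⇑θ '' {x : Fin (4 * n + 2) | 2 * n + 1 ≤ (x : ℕ)} =
      {x : Fin (4 * n + 2) | (x : ℕ) < 2 * n + 1} := by
    rw [hcompl, Set.image_compl_eq θ.bijective, himg1, hcompl, compl_compl]
  -- θ² = pasteRight α α
  have hsq : θ ^ 2 = toPerm42 n (pasteRight α α) := by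
    ext x
    rw [pow_two, Equiv.Perm.mul_apply]
    rcases Nat.lt_or_ge (x : ℕ) (2*n+1) with hx | hx
    · have h1 := hlo x hx
      have h2 := hup (θ x) (by omega)
      rw [pr_lower n α α x hx]
      omega
    · have h1 := hup x hx
      have h2 := hlo (θ x) (by omega)
      rw [pr_upper n α α x hx, h2]
      congr 2
      ext
      simp [h1]
  -- no fixed points
  have hnofix : ∀ x : Fin (4*n+2), θ x ≠ x := by
    intro x hfix
    have hv := congrArg Fin.val hfix
    rcases Nat.lt_or_ge (x : ℕ) (2*n+1) with hx | hx
    · have := hlo x hx; omega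
    · have := hup x hx; omega
  -- value-level versions of the defining hypotheses
  have hA1 : ∀ (v : ℕ) (hv : v < 2*n+1), v + 1 ≤ n →
      ((α ⟨v, hv⟩ : Fin (2*n+1)) : ℕ) + 1 = 2*n+2 - (v+1) := by
    intro v hv h
    have := hα1 ⟨v, hv⟩ (by omega) (by simpa using h)
    simpa using this
  have hA2 : ∀ (v : ℕ) (hv : v < 2*n+1), n + 1 ≤ v + 1 → v + 1 ≤ 2*n →
      ((α ⟨v, hv⟩ : Fin (2*n+1)) : ℕ) + 1 = 2*n+1 - (v+1) := by
    intro v hv h1 h2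
    have := hα2 ⟨v, hv⟩ (by simpa using h1) (by simpa using h2)
    simpa using this
  have hA3 : ∀ (hv : 2*n < 2*n+1),
      ((α ⟨2*n, hv⟩ : Fin (2*n+1)) : ℕ) + 1 = n + 1 := by
    intro hv
    have := hα3 ⟨2*n, hv⟩ (by simp)
    simpa using this
  -- two-step lemma on the lower block
  have hstep : ∀ (v : ℕ) (hv : v < 2*n+1) (hv4 : v < 4*n+2),
      θ (θ (⟨v, hv4⟩ : Fin (4*n+2))) = ⟨(α ⟨v, hv⟩ : ℕ), by omega⟩ := by
    intro v hv hv4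
    have h1 : (θ (⟨v, hv4⟩ : Fin (4*n+2)) : ℕ) = 2*n+1 + (α ⟨v, hv⟩ : ℕ) := by
      have := hlo ⟨v, hv4⟩ hv
      simpa using this
    have h2 := hup (θ ⟨v, hv4⟩) (by omega)
    apply Fin.ext
    show (θ (θ (⟨v, hv4⟩ : Fin (4*n+2))) : ℕ) = ((α ⟨v, hv⟩ : Fin (2*n+1)) : ℕ)
    omega
  -- the "reachable from 0" predicate, value-level
  set Q : ℕ → Prop := fun v => ∀ hv : v < 4*n+2, θ.SameCycle 0 ⟨v, hv⟩ with hQdef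
  have hclosed : ∀ (v w : ℕ) (hv : v < 2*n+1),
      ((α ⟨v, hv⟩ : Fin (2*n+1)) : ℕ) = w → Q v → Q w := by
    intro v w hv hvw h hw4
    have h0 := h (by omega)
    have he : (⟨w, hw4⟩ : Fin (4*n+2)) = ⟨(α ⟨v, hv⟩ : ℕ), by omega⟩ := Fin.ext hvw.symm
    rw [he, ← hstep v hv (by omega)]
    exact h0.apply_right.apply_right
  have hQ0 : Q 0 := by
    intro hv
    have he : (⟨0, hv⟩ : Fin (4*n+2)) = 0 := rfl
    rw [he]
  -- key zigzag induction
  have key : ∀ j, 1 ≤ j → j ≤ n → Q (n + j - 1) ∧ Q (n - j) := by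
    intro j
    induction j with
    | zero => omega
    | succ j ih =>
      intro _ hj
      rcases Nat.eq_zero_or_pos j with hj0 | hj1
      · subst hj0
        have hQ2n : Q (2*n) := by
          refine hclosed 0 (2*n) (by omega) ?_ hQ0
          have := hA1 0 (by omega) (by omega); omega
        have hQn : Q n := by
          refine hclosed (2*n) n (by omega) ?_ hQ2n
          have := hA3 (by omega); omega
        have hQn1 : Q (n - 1) := by
          refine hclosed n (n - 1) (by omega) ?_ hQn
          have := hA2 n (by omega) (by omega) (by omega); omega
        exact ⟨by rwa [show n + 1 - 1 = n from by omega], hQn1⟩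
      · obtain ⟨ih1, ih2⟩ := ih hj1 (by omega)
        have hQup : Q (n + j) := by
          refine hclosed (n - j) (n + j) (by omega) ?_ ih2
          have := hA1 (n - j) (by omega) (by omega); omega
        have hQdn : Q (n - j - 1) := by
          refine hclosed (n + j) (n - j - 1) (by omega) ?_ hQup
          have := hA2 (n + j) (by omega) (by omega) (by omega); omega
        constructor
        · rwa [show n + (j+1) - 1 = n + j from by omega]
        · rwa [show n - (j+1) = n - j - 1 from by omega]
  -- every lower point is on the cycle of 0
  have hall_lower : ∀ (v : ℕ), v < 2*n+1 → Q v := by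
    intro v hv
    rcases Nat.lt_or_ge v n with h | h
    · have := (key (n - v) (by omega) (by omega)).2
      rwa [show n - (n - v) = v from by omega] at this
    · rcases Nat.lt_or_ge v (2*n) with h2 | h2
      · have := (key (v - n + 1) (by omega) (by omega)).1
        rwa [show n + (v - n + 1) - 1 = v from by omega] at this
      · have hv2 : v = 2*n := by omega
        subst hv2
        refine hclosed 0 (2*n) (by omega) ?_ hQ0
        have := hA1 0 (by omega) (by omega); omega
  -- every point is on the cycle of 0
  have hall : ∀ y : Fin (4*n+2), θ.SameCycle 0 y := by
    intro y
    rcases Nat.lt_or_ge (y : ℕ) (2*n+1) with hy | hy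
    · have := hall_lower (y : ℕ) hy y.isLt
      rwa [show (⟨(y : ℕ), y.isLt⟩ : Fin (4*n+2)) = y from Fin.ext rfl] at this
    · set w : Fin (2*n+1) := α.symm ⟨(y:ℕ) - (2*n+1), by omega⟩ with hw
      have h1 := hall_lower (w : ℕ) w.isLt (by omega)
      have h2 : θ (⟨(w : ℕ), by omega⟩ : Fin (4*n+2)) = y := by
        apply Fin.ext
        have h3 : (θ (⟨(w : ℕ), by omega⟩ : Fin (4*n+2)) : ℕ)
            = 2*n+1 + (α ⟨(w : ℕ), w.isLt⟩ : ℕ) := by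
          have := hlo ⟨(w : ℕ), by omega⟩ w.isLt
          simpa using this
        have h4 : (⟨(w : ℕ), w.isLt⟩ : Fin (2*n+1)) = w := rfl
        rw [h3, h4, hw, Equiv.apply_symm_apply]
        simp; omega
      rw [← h2]
      exact h1.apply_right
  -- θ is a cycle, hence has order equal to its support card
  have hcycle : θ.IsCycle := ⟨0, hnofix 0, fun y _ => hall y⟩
  have hsupp : θ.support = Finset.univ := by
    rw [Finset.eq_univ_iff_forall]
    intro x
    rw [Equiv.Perm.mem_support]
    exact hnofix x
  have hord : orderOf θ = 4*n+2 := by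
    rw [hcycle.orderOf, hsupp, Finset.card_univ, Fintype.card_fin]
  exact ⟨himg1, himg2, hsq, hord⟩
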